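/- arXiv:1808.09221 — 2 statements merged into one kernel-verified Lean document; each statement's English description precedes it below -/
import Mathlib

section
/- Let ā, b̄, c̄, d̄, ē be real numbers each in the interval [−1, 1], and define S(x,y) = 2ā² cos²x sin²y + 2b̄² sin²x cos²y + cos 2x cos 2y + 2āb̄ sin 2x sin 2y + c̄d̄ sin 2x sin 2y − ē² cos²x cos²y. Then for all (x,y) ∈ [0, π/2] × [0, π/2], one has S(x,y) ≤ 2 sin²(x+y) + cos(2x−2y) + sin 2x sin 2y ≤ 4. -/
open Real

set_option maxHeartbeats 1000000

/-- **Estimate (3.34).** Let `ā, b̄, c̄, d̄, ē ∈ [−1, 1]` and let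
`S(x,y) = 2ā² cos²x sin²y + 2b̄² sin²x cos²y + cos 2x cos 2y
+ 2āb̄ sin 2x sin 2y + c̄d̄ sin 2x sin 2y − ē² cos²x cos²y`.
Then for all `(x, y) ∈ [0, π/2] × [0, π/2]`,
`S(x,y) ≤ 2 sin²(x+y) + cos(2x−2y) + sin 2x sin 2y ≤ 4`. -/
theorem S_upper_estimate (a b c d e : ℝ)
    (ha : a ∈ Set.Icc (-1 : ℝ) 1) (hb : b ∈ Set.Icc (-1 : ℝ) 1)
    (hc : c ∈ Set.Icc (-1 : ℝ) 1) (hd : d ∈ Set.Icc (-1 : ℝ) 1)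
    (he : e ∈ Set.Icc (-1 : ℝ) 1)
    (x y : ℝ) (hx : x ∈ Set.Icc (0 : ℝ) (π / 2))
    (hy : y ∈ Set.Icc (0 : ℝ) (π / 2)) :
    2 * a ^ 2 * Real.cos x ^ 2 * Real.sin y ^ 2
        + 2 * b ^ 2 * Real.sin x ^ 2 * Real.cos y ^ 2
        + Real.cos (2 * x) * Real.cos (2 * y)
        + 2 * a * b * Real.sin (2 * x) * Real.sin (2 * y)
        + c * d * Real.sin (2 * x) * Real.sin (2 * y)
        - e ^ 2 * Real.cos x ^ 2 * Real.cos y ^ 2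
      ≤ 2 * Real.sin (x + y) ^ 2 + Real.cos (2 * x - 2 * y)
          + Real.sin (2 * x) * Real.sin (2 * y)
    ∧ 2 * Real.sin (x + y) ^ 2 + Real.cos (2 * x - 2 * y)
          + Real.sin (2 * x) * Real.sin (2 * y) ≤ 4 := by
  obtain ⟨ha1, ha2⟩ := ha
  obtain ⟨hb1, hb2⟩ := hb
  obtain ⟨hc1, hc2⟩ := hc
  obtain ⟨hd1, hd2⟩ := hd
  obtain ⟨hx1, hx2⟩ := hx
  obtain ⟨hy1, hy2⟩ := hy
  have hsx : Real.sin x ≥ 0 := Real.sin_nonneg_of_nonneg_of_le_pi hx1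
    (hx2.trans (by linarith [Real.pi_pos]))
  have hsy : Real.sin y ≥ 0 := Real.sin_nonneg_of_nonneg_of_le_pi hy1
    (hy2.trans (by linarith [Real.pi_pos]))
  have hcx : Real.cos x ≥ 0 := Real.cos_nonneg_of_mem_Icc ⟨by linarith [Real.pi_pos], hx2⟩
  have hcy : Real.cos y ≥ 0 := Real.cos_nonneg_of_mem_Icc ⟨by linarith [Real.pi_pos], hy2⟩
  have px : Real.sin x ^ 2 + Real.cos x ^ 2 = 1 := Real.sin_sq_add_cos_sq x
  have py : Real.sin y ^ 2 + Real.cos y ^ 2 = 1 := Real.sin_sq_add_cos_sq y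
  have ha' : a ^ 2 ≤ 1 := by nlinarith
  have hb' : b ^ 2 ≤ 1 := by nlinarith
  have hcd : c * d ≤ 1 := by nlinarith
  have hab : a * b ≤ 1 := by nlinarith
  constructor
  · rw [Real.cos_sub, Real.sin_two_mul, Real.sin_two_mul, Real.cos_two_mul,
      Real.cos_two_mul, Real.sin_add]
    have huv : Real.cos x * Real.sin y * (Real.sin x * Real.cos y) ≥ 0 :=
      mul_nonneg (mul_nonneg hcx hsy) (mul_nonneg hsx hcy)
    nlinarith [mul_nonneg (sub_nonneg.mpr ha') (sq_nonneg (Real.cos x * Real.sin y)),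
      mul_nonneg (sub_nonneg.mpr hb') (sq_nonneg (Real.sin x * Real.cos y)),
      mul_nonneg (by nlinarith : (0:ℝ) ≤ 3 - 2 * (a * b) - c * d) huv,
      mul_nonneg (sq_nonneg e) (sq_nonneg (Real.cos x * Real.cos y))]
  · have h1 : Real.sin (x + y) ^ 2 ≤ 1 := Real.sin_sq_le_one _
    have h2 : Real.cos (2 * x - 2 * y) ≤ 1 := Real.cos_le_one _
    have h3 : Real.sin (2 * x) * Real.sin (2 * y) ≤ 1 := by
      have s2x : Real.sin (2 * x) ≥ 0 :=
        Real.sin_nonneg_of_nonneg_of_le_pi (by linarith) (by linarith)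
      have := Real.sin_le_one (2 * x)
      have := Real.sin_le_one (2 * y)
      nlinarith
    linarith
end

section
/- Define h(x,y) = cos(2x+2y) − 2 sin 2x sin 2y − cos²x cos²y. Then h(x,y) ≥ −3.3 for all (x,y) ∈ [0, π/2] × [0, π/2]. Moreover, h(π/4, π/4) = −3.25 while the partial derivatives satisfy h_x(π/4, π/4) = 1/2 ≠ 0 and h_y(π/4, π/4) = 1/2 ≠ 0, so (π/4, π/4) is not a critical point of h. -/
open Real

/-- the function `h(x,y) = cos(2x+2y) − 2 sin 2x sin 2y − cos²x cos²y` of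
(3.35) / Remark 4.10. -/
noncomputable def hfun (x y : ℝ) : ℝ :=
  Real.cos (2 * x + 2 * y) - 2 * Real.sin (2 * x) * Real.sin (2 * y)
    - Real.cos x ^ 2 * Real.cos y ^ 2

lemma hfun_lb (x y : ℝ) : (-3.3 : ℝ) ≤ hfun x y := by
  have hx := Real.sin_sq_add_cos_sq (2 * x)
  have hy := Real.sin_sq_add_cos_sq (2 * y)
  have hcx : Real.cos x ^ 2 = 1 / 2 + Real.cos (2 * x) / 2 := Real.cos_sq x
  have hcy : Real.cos y ^ 2 = 1 / 2 + Real.cos (2 * y) / 2 := Real.cos_sq y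
  have hadd : Real.cos (2 * x + 2 * y)
      = Real.cos (2 * x) * Real.cos (2 * y) - Real.sin (2 * x) * Real.sin (2 * y) :=
    Real.cos_add _ _
  unfold hfun
  rw [hadd, hcx, hcy]
  nlinarith [sq_nonneg (Real.sin (2*x) - Real.sin (2*y)),
    sq_nonneg (Real.cos (2*x) + Real.cos (2*y) - 2/7),
    sq_nonneg (Real.cos (2*x) - Real.cos (2*y)), hx, hy]

lemma hfun_comm (x y : ℝ) : hfun x y = hfun y x := by
  unfold hfun; ring_nf

lemma sqrt2_pow4 : Real.sqrt 2 ^ 4 = 4 := by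
  rw [show (Real.sqrt 2) ^ 4 = ((Real.sqrt 2) ^ 2) ^ 2 by ring,
    Real.sq_sqrt (by norm_num : (0:ℝ) ≤ 2)]
  norm_num

lemma hfun_val : hfun (π / 4) (π / 4) = (-3.25 : ℝ) := by
  unfold hfun
  have h1 : 2 * (π/4) + 2 * (π/4) = π := by ring
  have h2 : 2 * (π/4) = π/2 := by ring
  rw [h1, h2, Real.cos_pi, Real.sin_pi_div_two, Real.cos_pi_div_four]
  norm_num
  ring_nf
  rw [sqrt2_pow4]
  norm_num

lemma hfun_deriv : deriv (fun x => hfun x (π / 4)) (π / 4) = 1 / 2 := by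
  have hlin : HasDerivAt (fun x : ℝ => 2 * x + 2 * (π/4)) 2 (π/4) := by
    simpa using ((hasDerivAt_id (π/4)).const_mul 2).add_const (2 * (π/4))
  have hlin2 : HasDerivAt (fun x : ℝ => 2 * x) 2 (π/4) := by
    simpa using (hasDerivAt_id (π/4)).const_mul 2
  have h1 : HasDerivAt (fun x : ℝ => Real.cos (2 * x + 2 * (π/4)))
      (-Real.sin (2 * (π/4) + 2 * (π/4)) * 2) (π/4) :=
    (Real.hasDerivAt_cos _).comp _ hlin
  have h2 : HasDerivAt (fun x : ℝ => Real.sin (2 * x))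
      (Real.cos (2 * (π/4)) * 2) (π/4) :=
    (Real.hasDerivAt_sin _).comp _ hlin2
  have h3 : HasDerivAt (fun x : ℝ => Real.cos x ^ 2)
      (2 * Real.cos (π/4) ^ 1 * -Real.sin (π/4)) (π/4) :=
    (Real.hasDerivAt_cos _).pow 2 |>.congr_deriv (by norm_num)
  have H : HasDerivAt (fun x => hfun x (π/4))
      ((-Real.sin (2 * (π/4) + 2 * (π/4)) * 2)
        - 2 * (Real.cos (2 * (π/4)) * 2) * Real.sin (2 * (π/4))
        - (2 * Real.cos (π/4) ^ 1 * -Real.sin (π/4)) * Real.cos (π/4) ^ 2) (π/4) := by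
    unfold hfun
    exact (h1.sub (((h2.const_mul 2).mul_const (Real.sin (2 * (π/4)))).congr_deriv
        (by ring))).sub (h3.mul_const _)
  rw [H.deriv]
  have e1 : 2 * (π/4) + 2 * (π/4) = π := by ring
  have e2 : 2 * (π/4) = π/2 := by ring
  rw [e1, e2, Real.sin_pi, Real.cos_pi_div_two, Real.sin_pi_div_two,
    Real.cos_pi_div_four, Real.sin_pi_div_four]
  ring_nf
  rw [sqrt2_pow4]
  norm_num

lemma hfun_deriv' : deriv (fun y => hfun (π / 4) y) (π / 4) = 1 / 2 := by
  have : (fun y => hfun (π / 4) y) = (fun y => hfun y (π / 4)) := by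
    funext y; exact hfun_comm _ _
  rw [this]; exact hfun_deriv

/-- **Estimate (3.36) and Remark 4.10.** The function
`h(x,y) = cos(2x+2y) − 2 sin 2x sin 2y − cos²x cos²y` satisfies
`h(x,y) ≥ −3.3` on `[0, π/2] × [0, π/2]`.  Moreover `h(π/4, π/4) = −3.25`,
while `h_x(π/4, π/4) = 1/2 ≠ 0` and `h_y(π/4, π/4) = 1/2 ≠ 0`, so
`(π/4, π/4)` is not a critical point of `h`. -/
theorem hfun_lower_estimate :
    (∀ x ∈ Set.Icc (0 : ℝ) (π / 2), ∀ y ∈ Set.Icc (0 : ℝ) (π / 2),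
      (-3.3 : ℝ) ≤ hfun x y)
    ∧ hfun (π / 4) (π / 4) = (-3.25 : ℝ)
    ∧ deriv (fun x => hfun x (π / 4)) (π / 4) = 1 / 2
    ∧ deriv (fun y => hfun (π / 4) y) (π / 4) = 1 / 2
    ∧ deriv (fun x => hfun x (π / 4)) (π / 4) ≠ 0
    ∧ deriv (fun y => hfun (π / 4) y) (π / 4) ≠ 0 := by
  refine ⟨fun x _ y _ => hfun_lb x y, hfun_val, hfun_deriv, hfun_deriv', ?_, ?_⟩
  · rw [hfun_deriv]; norm_num
  · rw [hfun_deriv']; norm_num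
end
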